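/- Let X be a finite-dimensional normed space of dimension ≥ 2 and C ⊆ X a convex body with no asymptotic directions. Let {B_n} be an increasing sequence of convex bodies contained in C with C = ⋃_n int_C B_n. Then X = ⋃_n e(B_n). -/

import Mathlib

open Filter Metric Set Topology

/-- `K(y,B)`: the intersection of all closed half-spaces `[g ≤ g y]` over norm-one
functionals `g` supporting `B` at `y`. -/
def Kset {X : Type*} [NormedAddCommGroup X] [NormedSpace ℝ X]
    (B : Set X) (y : X) : Set X :=
  ⋂ g ∈ {g : X →L[ℝ] ℝ | ‖g‖ = 1 ∧ ∀ z ∈ B, g z ≤ g y}, {z : X | g z ≤ g y}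

/-- The relative boundary of `B` in the subspace topology of `C`. -/
def relBdry {X : Type*} [NormedAddCommGroup X] [NormedSpace ℝ X]
    (C B : Set X) : Set X :=
  (C ∩ closure B) ∩ closure (C \ B)

/-- The relative interior of `B` in the subspace topology of `C`. -/
def relInt {X : Type*} [NormedAddCommGroup X] [NormedSpace ℝ X]
    (C B : Set X) : Set X :=
  C \ closure (C \ B)

/-- The extension `e(B)` of a convex body `B ⊆ C`. -/
def eExt {X : Type*} [NormedAddCommGroup X] [NormedSpace ℝ X]
    (C B : Set X) : Set X :=
  ⋂ y ∈ relBdry C B, Kset B y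


/-- `v` is an asymptotic direction of the closed convex set `C`. -/
def IsAsymptoticDir {X : Type*} [NormedAddCommGroup X] [NormedSpace ℝ X]
    (C : Set X) (v : X) : Prop :=
  v ≠ 0 ∧ ∃ x₀ : X,
    (∀ t : ℝ, 0 ≤ t → x₀ + t • v ∉ interior C) ∧
    Filter.Tendsto (fun t : ℝ => Metric.infDist (x₀ + t • v) C) Filter.atTop (nhds 0)


section Lem
variable {X : Type*} [NormedAddCommGroup X] [NormedSpace ℝ X]

lemma infDist_mono_ray {W : Set X} (hWne : W.Nonempty) {v : X}
    (hrec : ∀ z ∈ W, ∀ t : ℝ, 0 ≤ t → z + t • v ∈ W)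
    (x : X) {t₁ t₂ : ℝ} (h : t₁ ≤ t₂) :
    infDist (x + t₂ • v) W ≤ infDist (x + t₁ • v) W := by
  refine le_of_forall_pos_le_add fun ε hε => ?_
  obtain ⟨w, hwW, hwd⟩ := (infDist_lt_iff hWne).mp
    (lt_add_of_pos_right (infDist (x + t₁ • v) W) hε)
  have hw' : w + (t₂ - t₁) • v ∈ W := hrec w hwW _ (by linarith)
  have hdd : dist (x + t₂ • v) (w + (t₂ - t₁) • v) = dist (x + t₁ • v) w := by
    rw [dist_eq_norm, dist_eq_norm]
    congr 1
    module
  calc infDist (x + t₂ • v) W ≤ dist (x + t₂ • v) (w + (t₂ - t₁) • v) :=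
        infDist_le_dist_of_mem hw'
    _ = dist (x + t₁ • v) w := hdd
    _ ≤ infDist (x + t₁ • v) W + ε := hwd.le

lemma exists_asym {W : Set X} (hWne : W.Nonempty) (g : X →L[ℝ] ℝ) (hg : ‖g‖ = 1)
    (σ : ℝ) (hb : ∀ z ∈ W, g z ≤ σ) {v : X} (hv : v ≠ 0) (hgv : g v = 0)
    (hrec : ∀ z ∈ W, ∀ t : ℝ, 0 ≤ t → z + t • v ∈ W) :
    IsAsymptoticDir W v := by
  refine ⟨hv, ?_⟩
  by_contra hcon
  push_neg at hcon
  set Z : Set X := {x | ∀ ε > 0, ∃ t : ℝ, 0 ≤ t ∧ infDist (x + t • v) W < ε} with hZ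
  have ZtoTendsto : ∀ x ∈ Z, Tendsto (fun t : ℝ => infDist (x + t • v) W) atTop (𝓝 0) := by
    intro x hx
    rw [Metric.tendsto_nhds]
    intro ε hε
    obtain ⟨t₁, ht₁, hlt⟩ := hx ε hε
    filter_upwards [eventually_ge_atTop t₁] with t ht
    rw [Real.dist_eq, sub_zero, abs_of_nonneg infDist_nonneg]
    exact lt_of_le_of_lt (infDist_mono_ray hWne hrec x ht) hlt
  have Zopen : IsOpen Z := by
    rw [Metric.isOpen_iff]
    intro x hx
    have h1 : ¬(∀ t : ℝ, 0 ≤ t → x + t • v ∉ interior W) := by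
      intro hA
      exact hcon x hA (ZtoTendsto x hx)
    push_neg at h1
    obtain ⟨t₀, ht₀, hint⟩ := h1
    obtain ⟨ε, hε, hball⟩ := Metric.isOpen_iff.mp isOpen_interior _ hint
    refine ⟨ε, hε, fun y hy => ?_⟩
    intro ε' hε'
    refine ⟨t₀, ht₀, ?_⟩
    have : y + t₀ • v ∈ W := by
      apply interior_subset (s := W)
      apply hball
      rw [mem_ball] at hy ⊢
      rwa [dist_add_right]
    rw [infDist_zero_of_mem this]
    exact hε'
  have Zclosed : IsClosed Z := by
    apply isClosed_of_closure_subset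
    intro x hx ε hε
    obtain ⟨x', hx'Z, hx'd⟩ := Metric.mem_closure_iff.mp hx (ε/2) (by linarith)
    obtain ⟨t, ht0, htd⟩ := hx'Z (ε/2) (by linarith)
    refine ⟨t, ht0, ?_⟩
    calc infDist (x + t • v) W ≤ infDist (x' + t • v) W + dist (x + t • v) (x' + t • v) :=
          infDist_le_infDist_add_dist
      _ = infDist (x' + t • v) W + dist x x' := by rw [dist_add_right]
      _ < ε/2 + ε/2 := by linarith
      _ = ε := by ring
  have Zne : W ⊆ Z := by
    intro w hw ε hε
    exact ⟨0, le_refl 0, by rw [zero_smul, add_zero, infDist_zero_of_mem hw]; exact hε⟩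
  haveI : PreconnectedSpace X := ⟨(convex_univ : Convex ℝ (univ : Set X)).isPreconnected⟩
  obtain ⟨w₀, hw₀⟩ := id hWne
  have Zuniv : Z = univ := IsClopen.eq_univ ⟨Zclosed, Zopen⟩ ⟨w₀, Zne hw₀⟩
  have gle : ∀ x : X, g x ≤ σ := by
    intro x
    have hxZ : x ∈ Z := by rw [Zuniv]; trivial
    refine le_of_forall_pos_le_add fun ε hε => ?_
    obtain ⟨t, ht0, hlt⟩ := hxZ ε hε
    obtain ⟨w, hwW, hwd⟩ := (infDist_lt_iff hWne).mp hlt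
    have h1 : g (x + t • v) = g x := by
      rw [map_add, map_smul, hgv, smul_zero, add_zero]
    have h2 : g (x + t • v) - g w ≤ ε := by
      have := g.le_opNorm ((x + t • v) - w)
      rw [hg, one_mul] at this
      have h3 : g (x + t • v) - g w ≤ ‖(x + t • v) - w‖ := by
        rw [← map_sub]
        exact (le_abs_self _).trans (le_of_eq (Real.norm_eq_abs _).symm) |>.trans this
      rw [← dist_eq_norm] at h3
      linarith
    have := hb w hwW
    linarith [h1 ▸ h2]
  have hgne : g ≠ 0 := fun h => by simp [h] at hg
  obtain ⟨u, hu⟩ : ∃ u, g u ≠ 0 := by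
    by_contra h
    push_neg at h
    exact hgne (ContinuousLinearMap.ext fun u => by simp [h u])
  have := gle (((|σ| + 1) / (g u)) • u)
  rw [map_smul, smul_eq_mul, div_mul_cancel₀ _ hu] at this
  have := le_abs_self σ
  linarith
end Lem


theorem stmt_17 {X : Type*} [NormedAddCommGroup X] [NormedSpace ℝ X]
    [FiniteDimensional ℝ X] (hd : 2 ≤ Module.finrank ℝ X)
    (C : Set X) (hclosed : IsClosed C) (hconv : Convex ℝ C) (hne : C ≠ Set.univ)
    (hint : (interior C).Nonempty)
    (hnoasym : ∀ v : X, ¬ IsAsymptoticDir C v)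
    (B : ℕ → Set X)
    (hB : ∀ n, IsClosed (B n) ∧ Convex ℝ (B n) ∧ B n ≠ Set.univ ∧
      (interior (B n)).Nonempty ∧ B n ⊆ C)
    (hmono : ∀ n, B n ⊆ B (n + 1))
    (hcover : C = ⋃ n, relInt C (B n)) :
    Set.univ = ⋃ n, eExt C (B n) := by
  have hCne : C.Nonempty := hint.mono interior_subset
  have hBmono : Monotone B := monotone_nat_of_le_succ hmono
  have hmemB : ∀ z ∈ C, ∃ m, z ∈ B m := by
    intro z hz
    rw [hcover] at hz
    obtain ⟨m, hm⟩ := mem_iUnion.mp hz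
    refine ⟨m, ?_⟩
    by_contra hzB
    exact hm.2 (subset_closure ⟨hm.1, hzB⟩)
  refine (Set.eq_univ_of_forall fun x => ?_).symm
  by_contra hx
  rw [Set.mem_iUnion] at hx
  push_neg at hx
  have hy : ∀ n, ∃ y ∈ relBdry C (B n), ∃ gg : X →L[ℝ] ℝ,
      ‖gg‖ = 1 ∧ (∀ z ∈ B n, gg z ≤ gg y) ∧ gg y < gg x := by
    intro n
    have h := hx n
    simp only [eExt, Kset, Set.mem_iInter, Set.mem_setOf_eq, not_forall] at h
    obtain ⟨y, hy1, gg, hgg, hnot⟩ := h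
    exact ⟨y, hy1, gg, hgg.1, hgg.2, lt_of_not_ge hnot⟩
  choose y hymem gseq hgnorm hgsupp hglt using hy
  -- escape to infinity
  have hesc : Tendsto (fun n => ‖y n‖) atTop atTop := by
    rw [Filter.tendsto_atTop]
    intro R
    have hK : IsCompact (C ∩ closedBall 0 R) :=
      (isCompact_closedBall (0:X) R).of_isClosed_subset
        (hclosed.inter isClosed_closedBall) inter_subset_right
    have hcov : C ∩ closedBall 0 R ⊆ ⋃ n, (closure (C \ B n))ᶜ := by
      intro z hz
      have hz2 : z ∈ ⋃ n, relInt C (B n) := hcover ▸ hz.1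
      obtain ⟨n, hn⟩ := mem_iUnion.mp hz2
      exact mem_iUnion.mpr ⟨n, hn.2⟩
    obtain ⟨t, ht⟩ := hK.elim_finite_subcover _
      (fun n => (isClosed_closure (s := C \ B n)).isOpen_compl) hcov
    set m := t.sup id with hm
    refine eventually_atTop.mpr ⟨m, fun n hn => ?_⟩
    by_contra hR
    push_neg at hR
    have hyK : y n ∈ C ∩ closedBall 0 R :=
      ⟨(hymem n).1.1, mem_closedBall_zero_iff.mpr hR.le⟩
    obtain ⟨j, hjt, hjz⟩ := Set.mem_iUnion₂.mp (ht hyK)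
    have hjm : j ≤ n := le_trans (Finset.le_sup (f := id) hjt) hn
    have h1 : y n ∈ closure (C \ B n) := (hymem n).2
    have h2 : y n ∈ closure (C \ B j) :=
      closure_mono (Set.diff_subset_diff_right (hBmono hjm)) h1
    exact hjz h2
  -- fixed point z₀ ∈ B 0
  obtain ⟨z₀, hz₀⟩ : (B 0).Nonempty := (hB 0).2.2.2.1.mono interior_subset
  have hz₀n : ∀ n, z₀ ∈ B n := fun n => hBmono (Nat.zero_le n) hz₀
  have hylb : ∀ n, -(‖z₀‖) ≤ gseq n (y n) := by
    intro n
    have h1 : gseq n z₀ ≤ gseq n (y n) := hgsupp n z₀ (hz₀n n)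
    have h2 : |gseq n z₀| ≤ ‖z₀‖ := by
      have := (gseq n).le_opNorm z₀
      rw [hgnorm n, one_mul, Real.norm_eq_abs] at this; exact this
    linarith [neg_abs_le (gseq n z₀)]
  have hyub : ∀ n, gseq n (y n) ≤ ‖x‖ := by
    intro n
    have h2 : |gseq n x| ≤ ‖x‖ := by
      have := (gseq n).le_opNorm x
      rw [hgnorm n, one_mul, Real.norm_eq_abs] at this; exact this
    linarith [(hglt n).le, le_abs_self (gseq n x)]
  -- subsequence extraction in product space
  set u : ℕ → X := fun n => ‖y n‖⁻¹ • y n with hu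
  set seq : ℕ → X × ((X →L[ℝ] ℝ) × ℝ) := fun n => (u n, (gseq n, gseq n (y n))) with hseq
  have hbdd : Bornology.IsBounded
      ((closedBall (0:X) 1) ×ˢ ((closedBall (0 : X →L[ℝ] ℝ) 1) ×ˢ
        (closedBall (0:ℝ) (‖z₀‖ + ‖x‖)))) :=
    (isBounded_closedBall).prod ((isBounded_closedBall).prod isBounded_closedBall)
  have hmem : ∀ n, seq n ∈ (closedBall (0:X) 1) ×ˢ ((closedBall (0 : X →L[ℝ] ℝ) 1) ×ˢ
      (closedBall (0:ℝ) (‖z₀‖ + ‖x‖))) := by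
    intro n
    refine ⟨?_, ?_, ?_⟩
    · show ‖y n‖⁻¹ • y n ∈ closedBall (0:X) 1
      rw [mem_closedBall_zero_iff]
      rcases eq_or_ne (y n) 0 with h | h
      · simp [h]
      · rw [norm_smul, norm_inv, norm_norm, inv_mul_cancel₀ (norm_ne_zero_iff.mpr h)]
    · show gseq n ∈ closedBall (0 : X →L[ℝ] ℝ) 1
      rw [mem_closedBall_zero_iff, hgnorm n]
    · show gseq n (y n) ∈ closedBall (0:ℝ) (‖z₀‖ + ‖x‖)
      rw [Real.closedBall_eq_Icc, Set.mem_Icc]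
      constructor
      · have := hylb n; linarith [norm_nonneg x]
      · have := hyub n; linarith [norm_nonneg z₀, zero_sub (0:ℝ)]
  obtain ⟨a, -, φ, hφmono, hφt⟩ := tendsto_subseq_of_bounded hbdd hmem
  obtain ⟨v, g, σ⟩ := a
  have hv : Tendsto (fun n => u (φ n)) atTop (𝓝 v) :=
    (continuous_fst.tendsto _).comp hφt
  have hg : Tendsto (fun n => gseq (φ n)) atTop (𝓝 g) :=
    (continuous_fst.tendsto _).comp ((continuous_snd.tendsto _).comp hφt)
  have hσ : Tendsto (fun n => gseq (φ n) (y (φ n))) atTop (𝓝 σ) :=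
    (continuous_snd.tendsto _).comp ((continuous_snd.tendsto _).comp hφt)
  have hφle : ∀ n, n ≤ φ n := fun n => hφmono.le_apply
  have hyφ : Tendsto (fun n => ‖y (φ n)‖) atTop atTop := hesc.comp hφmono.tendsto_atTop
  have hyinv : Tendsto (fun n => ‖y (φ n)‖⁻¹) atTop (𝓝 0) := hyφ.inv_tendsto_atTop
  have hevne : ∀ᶠ n in atTop, y (φ n) ≠ 0 := by
    filter_upwards [hyφ.eventually_ge_atTop 1] with n hn
    intro h
    rw [h, norm_zero] at hn
    linarith
  -- ‖g‖ = 1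
  have hgn : ‖g‖ = 1 := by
    have h1 : Tendsto (fun n => ‖gseq (φ n)‖) atTop (𝓝 ‖g‖) := hg.norm
    have h2 : Tendsto (fun n => ‖gseq (φ n)‖) atTop (𝓝 1) := by
      have : (fun n => ‖gseq (φ n)‖) = fun _ => (1:ℝ) := funext fun n => hgnorm (φ n)
      rw [this]; exact tendsto_const_nhds
    exact tendsto_nhds_unique h1 h2
  -- ‖v‖ = 1
  have hvn : ‖v‖ = 1 := by
    have h1 : Tendsto (fun n => ‖u (φ n)‖) atTop (𝓝 ‖v‖) := hv.norm
    have h2 : Tendsto (fun n => ‖u (φ n)‖) atTop (𝓝 1) := by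
      refine Tendsto.congr' ?_ (tendsto_const_nhds (x := (1:ℝ)))
      filter_upwards [hevne] with n hn
      show (1:ℝ) = ‖‖y (φ n)‖⁻¹ • y (φ n)‖
      rw [norm_smul, norm_inv, norm_norm, inv_mul_cancel₀ (norm_ne_zero_iff.mpr hn)]
    exact tendsto_nhds_unique h1 h2
  have hv0 : v ≠ 0 := by intro h; rw [h, norm_zero] at hvn; linarith
  -- evaluation tendsto
  have happ : ∀ z : X, Tendsto (fun n => gseq (φ n) z) atTop (𝓝 (g z)) := by
    intro z
    exact ((ContinuousLinearMap.apply ℝ ℝ z).continuous.tendsto _).comp hg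
  -- g bounded above on C by σ
  have hble : ∀ z ∈ C, g z ≤ σ := by
    intro z hz
    obtain ⟨m, hm⟩ := hmemB z hz
    refine le_of_tendsto_of_tendsto (happ z) hσ ?_
    filter_upwards [eventually_ge_atTop m] with n hn
    exact hgsupp (φ n) z (hBmono (le_trans hn (hφle n)) hm)
  -- v is a recession direction of C
  have hrec : ∀ z ∈ C, ∀ t : ℝ, 0 ≤ t → z + t • v ∈ C := by
    intro z hz t ht
    rcases eq_or_lt_of_le ht with h | ht
    · rw [← h, zero_smul, add_zero]; exact hz
    set w : ℕ → X := fun n => z + (t * ‖y (φ n)‖⁻¹) • (y (φ n) - z) with hw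
    have hwC : ∀ᶠ n in atTop, w n ∈ C := by
      filter_upwards [hyφ.eventually_ge_atTop (max t 1)] with n hn
      have hpos : (0:ℝ) < ‖y (φ n)‖ := lt_of_lt_of_le (by positivity) ((le_max_right t 1).trans hn)
      have hl0 : 0 ≤ t * ‖y (φ n)‖⁻¹ := by positivity
      have hl1 : t * ‖y (φ n)‖⁻¹ ≤ 1 := by
        rw [mul_inv_le_iff₀ hpos, one_mul]
        exact (le_max_left t 1).trans hn
      have hyC : y (φ n) ∈ C := (hymem (φ n)).1.1
      have hcc := hconv hz hyC (by linarith : (0:ℝ) ≤ 1 - t * ‖y (φ n)‖⁻¹) hl0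
        (by ring : (1 - t * ‖y (φ n)‖⁻¹) + t * ‖y (φ n)‖⁻¹ = 1)
      have heq : w n = (1 - t * ‖y (φ n)‖⁻¹) • z + (t * ‖y (φ n)‖⁻¹) • y (φ n) := by
        show z + (t * ‖y (φ n)‖⁻¹) • (y (φ n) - z) = _
        module
      rw [heq]
      exact hcc
    have hwt : Tendsto w atTop (𝓝 (z + t • v)) := by
      have h1 : (fun n => w n) =ᶠ[atTop]
          (fun n => z + (t • u (φ n) - (t * ‖y (φ n)‖⁻¹) • z)) := by
        filter_upwards [hevne] with n hn
        show z + (t * ‖y (φ n)‖⁻¹) • (y (φ n) - z)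
            = z + (t • (‖y (φ n)‖⁻¹ • y (φ n)) - (t * ‖y (φ n)‖⁻¹) • z)
        module
      apply Tendsto.congr' h1.symm
      have h2 : Tendsto (fun n => t • u (φ n) - (t * ‖y (φ n)‖⁻¹) • z) atTop
          (𝓝 (t • v - (0:ℝ) • z)) := by
        apply Tendsto.sub (hv.const_smul t)
        exact Tendsto.smul_const (by simpa using hyinv.const_mul t) z
      rw [zero_smul, sub_zero] at h2
      exact tendsto_const_nhds.add h2
    exact hclosed.mem_of_tendsto hwt hwC
  -- g v = 0
  have hgv : g v = 0 := by
    have e1 : Tendsto (fun n => gseq (φ n) (u (φ n))) atTop (𝓝 (g v)) := by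
      have hc : Continuous fun p : (X →L[ℝ] ℝ) × X => p.1 p.2 :=
        isBoundedBilinearMap_apply.continuous
      exact (hc.tendsto (g, v)).comp (hg.prodMk_nhds hv)
    have e2 : Tendsto (fun n => gseq (φ n) (u (φ n))) atTop (𝓝 0) := by
      have h0 : (fun n => gseq (φ n) (y (φ n)) * ‖y (φ n)‖⁻¹) =ᶠ[atTop]
          (fun n => gseq (φ n) (u (φ n))) := by
        filter_upwards [hevne] with n hn
        show _ = gseq (φ n) (‖y (φ n)‖⁻¹ • y (φ n))
        rw [map_smul, smul_eq_mul]
        ring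
      have h3 := hσ.mul hyinv
      rw [mul_zero] at h3
      exact Tendsto.congr' h0 h3
    exact tendsto_nhds_unique e1 e2
  exact hnoasym v (exists_asym hCne g hgn σ hble hv0 hgv hrec)
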